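/- Let 0 < a ≤ b, K ≥ 0, and let u : Ω → ℝ^l be a C¹ map on an open neighbourhood Ω of the closed annulus {a ≤ |x| ≤ b} in ℝ², satisfying |∇u(x)| ≤ K/|x| for all a ≤ |x| ≤ b. Then for all x, y with a ≤ |x| ≤ b and a ≤ |y| ≤ b one has |u(x) − u(y)| ≤ K (log(b/a) + π). In particular the oscillation of u over the annulus is at most K(log(b/a) + π). -/

import Mathlib

open scoped RealInnerProductSpace
open Filter MeasureTheory Metric

noncomputable section

/-- The plane `ℝ²` as a Euclidean space. -/
abbrev E2 : Type := EuclideanSpace ℝ (Fin 2)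

/-- Euclidean space `ℝ^l`. -/
abbrev Eu (l : ℕ) : Type := EuclideanSpace ℝ (Fin l)

/-- Partial derivative `∂_α u` of a map `u : ℝ² → ℝ^l`. -/
def pd {l : ℕ} (α : Fin 2) (u : E2 → Eu l) (x : E2) : Eu l :=
  fderiv ℝ u x (EuclideanSpace.single α 1)

/-- Partial derivative `∂_α f` of a scalar function `f : ℝ² → ℝ`. -/
def pds (α : Fin 2) (f : E2 → ℝ) (x : E2) : ℝ :=
  fderiv ℝ f x (EuclideanSpace.single α 1)

/-- The componentwise Laplacian `Δu = ∂₁∂₁u + ∂₂∂₂u`. -/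
def lap {l : ℕ} (u : E2 → Eu l) (x : E2) : Eu l :=
  pd 0 (pd 0 u) x + pd 1 (pd 1 u) x

/-- `|∇u|² = |∂₁u|² + |∂₂u|²`. -/
def gradSq {l : ℕ} (u : E2 → Eu l) (x : E2) : ℝ :=
  ‖pd 0 u x‖ ^ 2 + ‖pd 1 u x‖ ^ 2

/-- The harmonic stress-energy tensor `S¹_{αβ}(u) = ½|∇u|²δ_{αβ} − ⟨∂_α u, ∂_β u⟩`. -/
def S1 {l : ℕ} (u : E2 → Eu l) (α β : Fin 2) (x : E2) : ℝ :=
  (1 / 2) * gradSq u x * (if α = β then 1 else 0) - ⟪pd α u x, pd β u x⟫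


lemma opnorm_le_sqrt_gradSq {l : ℕ} (u : E2 → Eu l) (x : E2) :
    ‖fderiv ℝ u x‖ ≤ Real.sqrt (gradSq u x) := by
  apply ContinuousLinearMap.opNorm_le_bound _ (Real.sqrt_nonneg _)
  intro v
  have hv : v = v 0 • EuclideanSpace.single 0 1 + v 1 • EuclideanSpace.single 1 1 := by
    ext i; fin_cases i <;> simp [EuclideanSpace.single_apply]
  set D := fderiv ℝ u x
  have h1 : D v = v 0 • pd 0 u x + v 1 • pd 1 u x := by
    conv_lhs => rw [hv]
    simp [pd]
    rfl
  rw [h1]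
  have htri : ‖v 0 • pd 0 u x + v 1 • pd 1 u x‖ ≤ |v 0| * ‖pd 0 u x‖ + |v 1| * ‖pd 1 u x‖ := by
    refine (norm_add_le _ _).trans ?_
    simp [norm_smul, Real.norm_eq_abs]
  refine htri.trans ?_
  have hnv : ‖v‖ = Real.sqrt ((v 0)^2 + (v 1)^2) := by
    rw [EuclideanSpace.norm_eq]
    congr 1
    rw [Fin.sum_univ_two]
    simp [sq_abs]
  rw [hnv, gradSq, ← Real.sqrt_mul (by positivity)]
  rw [Real.le_sqrt (by positivity)]
  nlinarith [sq_nonneg (|v 0| * ‖pd 1 u x‖ - |v 1| * ‖pd 0 u x‖), abs_nonneg (v 0), abs_nonneg (v 1),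
    norm_nonneg (pd 0 u x), norm_nonneg (pd 1 u x), _root_.sq_abs (v 0), _root_.sq_abs (v 1)]
  positivity

/-- if `u` is `C¹` on a neighbourhood of the closed annulus `{a ≤ |x| ≤ b}`
(`0 < a ≤ b`) with `|∇u(x)| ≤ K/|x|` there, then for all `x, y` in the annulus
`|u(x) − u(y)| ≤ K(log(b/a) + π)`; in particular the oscillation of `u` over the annulus is
at most `K(log(b/a) + π)`. -/
theorem annulus_oscillation_bound {l : ℕ} (a b K : ℝ) (ha : 0 < a) (hab : a ≤ b) (hK : 0 ≤ K)
    (Ω : Set E2) (hΩ : IsOpen Ω) (hann : {x : E2 | a ≤ ‖x‖ ∧ ‖x‖ ≤ b} ⊆ Ω)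
    (u : E2 → Eu l) (hu : ContDiffOn ℝ 1 u Ω)
    (hgrad : ∀ x : E2, a ≤ ‖x‖ → ‖x‖ ≤ b → Real.sqrt (gradSq u x) ≤ K / ‖x‖) :
    ∀ x y : E2, a ≤ ‖x‖ → ‖x‖ ≤ b → a ≤ ‖y‖ → ‖y‖ ≤ b →
      ‖u x - u y‖ ≤ K * (Real.log (b / a) + Real.pi) := by
  intro x y hax hxb hay hyb
  have hb : 0 < b := lt_of_lt_of_le ha hab
  set f : ℂ ≃ₗᵢ[ℝ] E2 := Complex.isometryOfOrthonormal (EuclideanSpace.basisFun (Fin 2) ℝ) with hf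
  set S : Set ℂ := {z | Real.log a ≤ z.re ∧ z.re ≤ Real.log b} with hS
  -- the strip is convex
  have hconv : Convex ℝ S := by
    intro z hz w hw p q hp hq hpq
    have hre : (p • z + q • w).re = p * z.re + q * w.re := by
      simp [Complex.add_re, Complex.smul_re]
    have ea : p * Real.log a + q * Real.log a = Real.log a := by
      rw [← add_mul, hpq, one_mul]
    have eb : p * Real.log b + q * Real.log b = Real.log b := by
      rw [← add_mul, hpq, one_mul]
    constructor
    · rw [hre]
      linarith [mul_le_mul_of_nonneg_left hz.1 hp, mul_le_mul_of_nonneg_left hw.1 hq]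
    · rw [hre]
      linarith [mul_le_mul_of_nonneg_left hz.2 hp, mul_le_mul_of_nonneg_left hw.2 hq]
  -- points of the strip map into the annulus
  have hmem : ∀ z : ℂ, z ∈ S → a ≤ ‖f (Complex.exp z)‖ ∧ ‖f (Complex.exp z)‖ ≤ b := by
    intro z hz
    have hnorm : ‖f (Complex.exp z)‖ = Real.exp z.re := by
      rw [f.norm_map, Complex.norm_exp]
    constructor
    · rw [hnorm, ← Real.exp_log ha]; exact Real.exp_le_exp.mpr hz.1
    · rw [hnorm, ← Real.exp_log hb]; exact Real.exp_le_exp.mpr hz.2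
  -- the derivative of the composition
  set F : ℂ → (ℂ →L[ℝ] Eu l) := fun z =>
    ((fderiv ℝ u (f (Complex.exp z))).comp
      ((f.toContinuousLinearEquiv : ℂ →L[ℝ] E2).comp
        ((ContinuousLinearMap.smulRight (1 : ℂ →L[ℂ] ℂ) (Complex.exp z)).restrictScalars ℝ))) with hF
  have hderiv : ∀ z ∈ S, HasFDerivAt (fun z => u (f (Complex.exp z))) (F z) z := by
    intro z hz
    have hpΩ : f (Complex.exp z) ∈ Ω := hann ⟨(hmem z hz).1, (hmem z hz).2⟩
    have hdu : DifferentiableAt ℝ u (f (Complex.exp z)) :=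
      (hu.contDiffAt (hΩ.mem_nhds hpΩ)).differentiableAt one_ne_zero
    have h1 : HasFDerivAt Complex.exp
        ((ContinuousLinearMap.smulRight (1 : ℂ →L[ℂ] ℂ) (Complex.exp z)).restrictScalars ℝ) z :=
      (Complex.hasDerivAt_exp z).hasFDerivAt.restrictScalars ℝ
    have h2 : HasFDerivAt (⇑f) (f.toContinuousLinearEquiv : ℂ →L[ℝ] E2) (Complex.exp z) :=
      (f.toContinuousLinearEquiv : ℂ →L[ℝ] E2).hasFDerivAt
    exact hdu.hasFDerivAt.comp z (h2.comp z h1)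
  -- the operator norm bound
  have hbound : ∀ z ∈ S, ‖F z‖ ≤ K := by
    intro z hz
    have hE : (0 : ℝ) < Real.exp z.re := Real.exp_pos _
    have hnorm : ‖f (Complex.exp z)‖ = Real.exp z.re := by
      rw [f.norm_map, Complex.norm_exp]
    apply ContinuousLinearMap.opNorm_le_bound _ hK
    intro v
    have happ : F z v = fderiv ℝ u (f (Complex.exp z)) (f (v * Complex.exp z)) := by
      simp [hF, ContinuousLinearMap.comp_apply, smul_eq_mul]
    rw [happ]
    have hmul : ‖f (v * Complex.exp z)‖ = ‖v‖ * Real.exp z.re := by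
      rw [f.norm_map, norm_mul, Complex.norm_exp]
    have h1 : ‖fderiv ℝ u (f (Complex.exp z)) (f (v * Complex.exp z))‖ ≤
        ‖fderiv ℝ u (f (Complex.exp z))‖ * (‖v‖ * Real.exp z.re) := by
      refine (ContinuousLinearMap.le_opNorm _ _).trans ?_
      rw [hmul]
    refine h1.trans ?_
    have h2 : ‖fderiv ℝ u (f (Complex.exp z))‖ ≤ K / Real.exp z.re := by
      refine (opnorm_le_sqrt_gradSq u _).trans ?_
      rw [← hnorm]
      exact hgrad _ (hmem z hz).1 (hmem z hz).2
    calc ‖fderiv ℝ u (f (Complex.exp z))‖ * (‖v‖ * Real.exp z.re)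
        ≤ (K / Real.exp z.re) * (‖v‖ * Real.exp z.re) := by
          apply mul_le_mul_of_nonneg_right h2; positivity
      _ = K * ‖v‖ := by field_simp
  -- the key estimate on the strip
  have key : ∀ z ∈ S, ∀ w ∈ S, ‖u (f (Complex.exp w)) - u (f (Complex.exp z))‖ ≤ K * ‖w - z‖ := by
    intro z hz w hw
    exact hconv.norm_image_sub_le_of_norm_hasFDerivWithin_le
      (fun p hp => (hderiv p hp).hasFDerivWithinAt) hbound hz hw
  -- choose logarithms
  set c : ℂ := f.symm x with hc
  set d : ℂ := f.symm y with hd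
  have hcx : ‖x‖ = ‖c‖ := by rw [hc, f.symm.norm_map]
  have hdy : ‖y‖ = ‖d‖ := by rw [hd, f.symm.norm_map]
  have hc0 : c ≠ 0 := by
    intro h
    have : ‖x‖ = 0 := by rw [hcx, h]; simp
    linarith
  have hd0 : d ≠ 0 := by
    intro h
    have : ‖y‖ = 0 := by rw [hdy, h]; simp
    linarith
  set z₁ : ℂ := Complex.log c with hz₁
  have hez₁ : Complex.exp z₁ = c := Complex.exp_log hc0
  have hz₁re : z₁.re = Real.log ‖x‖ := by rw [hz₁, Complex.log_re, hcx]
  have hz₁im : z₁.im = Complex.arg c := Complex.log_im c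
  -- choose the shifted logarithm of d
  set k : ℝ := if Complex.arg c - Complex.arg d > Real.pi then 2 * Real.pi
    else if Complex.arg c - Complex.arg d < -Real.pi then -(2 * Real.pi) else 0 with hk
  set z₂ : ℂ := Complex.log d + (k : ℂ) * Complex.I with hz₂
  have hez₂ : Complex.exp z₂ = d := by
    rw [hz₂, Complex.exp_add, Complex.exp_log hd0]
    have : Complex.exp ((k : ℂ) * Complex.I) = 1 := by
      rw [hk]
      split_ifs with h1 h2
      · push_cast; exact Complex.exp_two_pi_mul_I
      · push_cast
        rw [show -(2 * (Real.pi : ℂ)) * Complex.I = -(2 * (Real.pi : ℂ) * Complex.I) by ring,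
          Complex.exp_neg, Complex.exp_two_pi_mul_I]
        simp
      · simp
    rw [this, mul_one]
  have hz₂re : z₂.re = Real.log ‖y‖ := by
    rw [hz₂]; simp [Complex.add_re, Complex.log_re, hdy]
  have hz₂im : z₂.im = Complex.arg d + k := by
    rw [hz₂]; simp [Complex.add_im, Complex.log_im]
  -- membership
  have hz₁S : z₁ ∈ S := by
    constructor
    · rw [hz₁re]; exact Real.log_le_log ha hax
    · rw [hz₁re]; exact Real.log_le_log (lt_of_lt_of_le ha hax) hxb
  have hz₂S : z₂ ∈ S := by
    constructor
    · rw [hz₂re]; exact Real.log_le_log ha hay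
    · rw [hz₂re]; exact Real.log_le_log (lt_of_lt_of_le ha hay) hyb
  -- the distance bound
  have harg_c₁ : Complex.arg c ≤ Real.pi := Complex.arg_le_pi c
  have harg_c₂ : -Real.pi < Complex.arg c := Complex.neg_pi_lt_arg c
  have harg_d₁ : Complex.arg d ≤ Real.pi := Complex.arg_le_pi d
  have harg_d₂ : -Real.pi < Complex.arg d := Complex.neg_pi_lt_arg d
  have him : |z₁.im - z₂.im| ≤ Real.pi := by
    rw [hz₁im, hz₂im, hk]
    split_ifs with h1 h2
    · rw [abs_le]
      constructor <;> linarith [Real.pi_pos.le]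
    · rw [abs_le]
      constructor <;> linarith [Real.pi_pos.le]
    · rw [abs_le]
      constructor <;> linarith [Real.pi_pos.le]
  have hre : |z₁.re - z₂.re| ≤ Real.log (b / a) := by
    rw [hz₁re, hz₂re, Real.log_div (ne_of_gt hb) (ne_of_gt ha), abs_le]
    have l1 : Real.log a ≤ Real.log ‖x‖ := Real.log_le_log ha hax
    have l2 : Real.log ‖x‖ ≤ Real.log b := Real.log_le_log (lt_of_lt_of_le ha hax) hxb
    have l3 : Real.log a ≤ Real.log ‖y‖ := Real.log_le_log ha hay
    have l4 : Real.log ‖y‖ ≤ Real.log b := Real.log_le_log (lt_of_lt_of_le ha hay) hyb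
    constructor <;> linarith
  have hdist : ‖z₁ - z₂‖ ≤ Real.log (b / a) + Real.pi := by
    refine (Complex.norm_le_abs_re_add_abs_im (z₁ - z₂)).trans ?_
    rw [Complex.sub_re, Complex.sub_im]
    exact add_le_add hre him
  -- conclude
  have hx' : u x = u (f (Complex.exp z₁)) := by rw [hez₁, hc, f.apply_symm_apply]
  have hy' : u y = u (f (Complex.exp z₂)) := by rw [hez₂, hd, f.apply_symm_apply]
  rw [hx', hy']
  calc ‖u (f (Complex.exp z₁)) - u (f (Complex.exp z₂))‖ ≤ K * ‖z₁ - z₂‖ :=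
        key z₂ hz₂S z₁ hz₁S
    _ ≤ K * (Real.log (b / a) + Real.pi) := mul_le_mul_of_nonneg_left hdist hK

end
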